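/- If h₁ and h₂ are averaged operators on a real Hilbert space with Fix(h₁) ∩ Fix(h₂) ≠ ∅, then Fix(h₁h₂) = Fix(h₁) ∩ Fix(h₂). -/

import Mathlib

open RealInnerProductSpace

lemma averaged_key_ineq
    {H : Type*} [NormedAddCommGroup H] [InnerProductSpace ℝ H]
    {c : ℝ} (hc0 : 0 < c) (hc1 : c < 1) {h N : H → H}
    (hN : ∀ x y : H, ‖N x - N y‖ ≤ ‖x - y‖)
    (hh : ∀ x : H, h x = (1 - c) • x + c • N x) (x y : H) :
    ‖h x - h y‖ ^ 2 + (1 - c) / c * ‖(x - h x) - (y - h y)‖ ^ 2 ≤ ‖x - y‖ ^ 2 := by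
  set a := x - y with ha
  set b := N x - N y with hb
  have e1 : h x - h y = (1 - c) • a + c • b := by
    rw [hh, hh, ha, hb]; module
  have e2 : (x - h x) - (y - h y) = c • (a - b) := by
    rw [hh, hh, ha, hb]; module
  rw [e1, e2]
  have hba : ‖b‖ ≤ ‖a‖ := hN x y
  have expand : ‖(1 - c) • a + c • b‖ ^ 2 =
      ‖(1 - c) • a‖ ^ 2 + 2 * ⟪(1 - c) • a, c • b⟫ + ‖c • b‖ ^ 2 := by
    rw [@norm_add_sq_real]
  have hip : ⟪(1 - c) • a, c • b⟫ = (1 - c) * c * ⟪a, b⟫ := by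
    rw [real_inner_smul_left, real_inner_smul_right]; ring
  have hnsmul1 : ‖(1 - c) • a‖ = (1 - c) * ‖a‖ := by
    rw [norm_smul, Real.norm_eq_abs, abs_of_pos (by linarith)]
  have hnsmul2 : ‖c • b‖ = c * ‖b‖ := by
    rw [norm_smul, Real.norm_eq_abs, abs_of_pos hc0]
  have hnsmul3 : ‖c • (a - b)‖ = c * ‖a - b‖ := by
    rw [norm_smul, Real.norm_eq_abs, abs_of_pos hc0]
  have hsub : ‖a - b‖ ^ 2 = ‖a‖ ^ 2 - 2 * ⟪a, b⟫ + ‖b‖ ^ 2 := by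
    rw [@norm_sub_sq_real]
  have hdiv : (1 - c) / c * (c * ‖a - b‖) ^ 2 = (1 - c) * c * ‖a - b‖ ^ 2 := by
    field_simp
  rw [expand, hip, hnsmul1, hnsmul2, hnsmul3, hdiv, hsub]
  nlinarith [norm_nonneg a, norm_nonneg b, mul_self_le_mul_self (norm_nonneg b) hba]

/-- If `h₁` and `h₂` are averaged operators on a real Hilbert space with
`Fix(h₁) ∩ Fix(h₂) ≠ ∅`, then `Fix(h₁ ∘ h₂) = Fix(h₁) ∩ Fix(h₂)`. -/
theorem fixedPoints_comp_of_averaged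
    {H : Type*} [NormedAddCommGroup H] [InnerProductSpace ℝ H] [CompleteSpace H]
    (h₁ h₂ : H → H)
    (H₁ : ∃ c ∈ Set.Ioo (0 : ℝ) 1, ∃ N : H → H, (∀ x y : H, ‖N x - N y‖ ≤ ‖x - y‖) ∧
      ∀ x : H, h₁ x = (1 - c) • x + c • N x)
    (H₂ : ∃ c ∈ Set.Ioo (0 : ℝ) 1, ∃ N : H → H, (∀ x y : H, ‖N x - N y‖ ≤ ‖x - y‖) ∧
      ∀ x : H, h₂ x = (1 - c) • x + c • N x)
    (hfix : (Function.fixedPoints h₁ ∩ Function.fixedPoints h₂).Nonempty) :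
    Function.fixedPoints (h₁ ∘ h₂) = Function.fixedPoints h₁ ∩ Function.fixedPoints h₂ := by
  obtain ⟨c₁, ⟨hc₁0, hc₁1⟩, N₁, hN₁, hh₁⟩ := H₁
  obtain ⟨c₂, ⟨hc₂0, hc₂1⟩, N₂, hN₂, hh₂⟩ := H₂
  obtain ⟨z, hz₁, hz₂⟩ := hfix
  ext x
  simp only [Function.mem_fixedPoints, Set.mem_inter_iff, Function.IsFixedPt,
    Function.comp_apply] at *
  constructor
  · intro hx
    -- key inequalities with y = z
    have k₁ := averaged_key_ineq hc₁0 hc₁1 hN₁ hh₁ (h₂ x) z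
    have k₂ := averaged_key_ineq hc₂0 hc₂1 hN₂ hh₂ x z
    rw [hx, hz₁] at k₁
    rw [hz₂] at k₂
    -- k₁ : ‖x - z‖² + (1-c₁)/c₁ * ‖(h₂ x - x) - (z - z)‖² ≤ ‖h₂ x - z‖²
    -- k₂ : ‖h₂ x - z‖² + (1-c₂)/c₂ * ‖(x - h₂ x) - (z - z)‖² ≤ ‖x - z‖²
    have pos₁ : 0 < (1 - c₁) / c₁ := div_pos (by linarith) hc₁0
    have pos₂ : 0 < (1 - c₂) / c₂ := div_pos (by linarith) hc₂0
    have hzz : (z : H) - z = 0 := sub_self z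
    rw [hzz, sub_zero] at k₁ k₂
    have hnorm : ‖x - h₂ x‖ ^ 2 = 0 := by
      have h12 : ‖h₂ x - x‖ = ‖x - h₂ x‖ := norm_sub_rev _ _
      rw [h12] at k₁
      nlinarith [sq_nonneg ‖x - h₂ x‖]
    have hfix2 : h₂ x = x := by
      have h0 : x - h₂ x = 0 := by
        have := sq_eq_zero_iff.mp hnorm
        exact norm_eq_zero.mp this
      have := sub_eq_zero.mp h0
      exact this.symm
    exact ⟨by rw [hfix2] at hx; exact hx, hfix2⟩
  · rintro ⟨hx₁, hx₂⟩
    rw [hx₂, hx₁]
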